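/- Let G be a group generated by elements a_1,…,a_m (m ≥ 2) which is δ-hyperbolic. Let ℓ and a be integers with 0 ≤ a ≤ ℓ, and let x ∈ B_ℓ. Then the number of elements y ∈ B_ℓ such that the Gromov product satisfies (x,y) ≥ a is at most |B_{ℓ−a+2δ}|. -/

import Mathlib

open Filter Set

namespace GrowthRQ

variable {G : Type*} [Group G] {m : ℕ}

/-- Word norm with respect to the generators `gen i` and their inverses. -/
noncomputable def wordNorm (gen : Fin m → G) (x : G) : ℕ :=
  sInf {n | ∃ w : List (Fin m × Bool), w.length = n ∧
    (w.map (fun p => if p.2 then gen p.1 else (gen p.1)⁻¹)).prod = x}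

/-- Ball of (real) radius `r` for the word norm. -/
def ball (gen : Fin m → G) (r : ℝ) : Set G := {x | (wordNorm gen x : ℝ) ≤ r}

/-- Annulus of elements of norm in `(ℓ - a, ℓ]`. -/
def ann (gen : Fin m → G) (ℓ a : ℝ) : Set G := ball gen ℓ \ ball gen (ℓ - a)

/-- Growth exponent in base `2m-1`. (The limit exists by submultiplicativity,
so it equals the `limsup`.) -/
noncomputable def growthExponent (gen : Fin m → G) : ℝ :=
  Filter.limsup (fun L : ℕ => Real.logb (2 * (m : ℝ) - 1) ((ball gen L).ncard) / L) Filter.atTop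

/-- Gromov product with origin `e`. -/
noncomputable def gromov (gen : Fin m → G) (x y : G) : ℝ :=
  ((wordNorm gen x : ℝ) + (wordNorm gen y : ℝ) - (wordNorm gen (x⁻¹ * y) : ℝ)) / 2

/-- `δ`-hyperbolicity via the Gromov product. -/
def IsHyperbolic (gen : Fin m → G) (δ : ℝ) : Prop :=
  ∀ x y z : G, gromov gen x z ≥ min (gromov gen x y) (gromov gen y z) - δ

/-- Non-elementary: not virtually cyclic. -/
def NonElementary (G : Type*) [Group G] : Prop :=
  ¬ ∃ H : Subgroup G, H.index ≠ 0 ∧ IsCyclic H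

/-- Probability, for `N` independent uniform choices of relators in the ball of radius `ℓ`,
that the chosen tuple satisfies `P`. -/
noncomputable def quotProb (gen : Fin m → G) (ℓ N : ℕ) (P : (Fin N → G) → Prop) : ℝ :=
  (({r : Fin N → G | (∀ i, r i ∈ ball gen (ℓ : ℝ)) ∧ P r}).ncard : ℝ) /
  (({r : Fin N → G | ∀ i, r i ∈ ball gen (ℓ : ℝ)}).ncard : ℝ)

/-- Images of the generators in the quotient by the normal closure of the relators. -/
noncomputable def quotGen (gen : Fin m → G) {N : ℕ} (r : Fin N → G) :
    Fin m → G ⧸ Subgroup.normalClosure (Set.range r) :=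
  fun i => QuotientGroup.mk (gen i)


section Aux

variable {G : Type*} [Group G] {m : ℕ}

/-- Evaluation of a word in the generators. -/
def evalW (gen : Fin m → G) (w : List (Fin m × Bool)) : G :=
  (w.map (fun p => if p.2 then gen p.1 else (gen p.1)⁻¹)).prod

lemma exists_word (gen : Fin m → G) (hgen : Subgroup.closure (Set.range gen) = ⊤) (x : G) :
    ∃ w : List (Fin m × Bool), evalW gen w = x := by
  have hx : x ∈ (Subgroup.closure (Set.range gen)).toSubmonoid := by
    rw [hgen]; trivial
  rw [Subgroup.closure_toSubmonoid] at hx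
  obtain ⟨l, hl, hprod⟩ := Submonoid.exists_list_of_mem_closure hx
  clear hx
  subst hprod
  induction l with
  | nil => exact ⟨[], rfl⟩
  | cons y t ih =>
    obtain ⟨w, hw⟩ := ih (fun z hz => hl z (List.mem_cons_of_mem _ hz))
    rcases hl y List.mem_cons_self with h | h
    · obtain ⟨i, hi⟩ := h
      refine ⟨(i, true) :: w, ?_⟩
      simp only [evalW, List.map_cons, List.prod_cons, if_pos] at *
      rw [hw, hi]
    · have h' : y⁻¹ ∈ Set.range gen := h
      obtain ⟨i, hi⟩ := h'
      refine ⟨(i, false) :: w, ?_⟩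
      simp only [evalW, List.map_cons, List.prod_cons, if_neg, Bool.false_eq_true,
        not_false_iff] at *
      rw [hw, hi, inv_inv]

lemma wordNorm_le (gen : Fin m → G) {x : G} (w : List (Fin m × Bool)) (h : evalW gen w = x) :
    wordNorm gen x ≤ w.length :=
  Nat.sInf_le ⟨w, rfl, h⟩

lemma wordNorm_witness (gen : Fin m → G) (hgen : Subgroup.closure (Set.range gen) = ⊤) (x : G) :
    ∃ w : List (Fin m × Bool), w.length = wordNorm gen x ∧ evalW gen w = x := by
  have hne : {n | ∃ w : List (Fin m × Bool), w.length = n ∧ evalW gen w = x}.Nonempty :=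
    let ⟨w, hw⟩ := exists_word gen hgen x; ⟨w.length, w, rfl, hw⟩
  exact Nat.sInf_mem hne

lemma evalW_append (gen : Fin m → G) (w₁ w₂ : List (Fin m × Bool)) :
    evalW gen (w₁ ++ w₂) = evalW gen w₁ * evalW gen w₂ := by
  simp [evalW]

lemma wordNorm_mul_le (gen : Fin m → G) (hgen : Subgroup.closure (Set.range gen) = ⊤) (x y : G) :
    wordNorm gen (x * y) ≤ wordNorm gen x + wordNorm gen y := by
  obtain ⟨w₁, hl₁, he₁⟩ := wordNorm_witness gen hgen x
  obtain ⟨w₂, hl₂, he₂⟩ := wordNorm_witness gen hgen y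
  have := wordNorm_le gen (w₁ ++ w₂) (by rw [evalW_append, he₁, he₂])
  simpa [hl₁, hl₂] using this

lemma ball_finite (gen : Fin m → G) (hgen : Subgroup.closure (Set.range gen) = ⊤) (r : ℝ) :
    (ball gen r).Finite := by
  have hsub : ball gen r ⊆ (fun w => evalW gen w) ''
      {w : List (Fin m × Bool) | w.length ≤ ⌊r⌋₊} := by
    intro x hx
    obtain ⟨w, hlen, hw⟩ := wordNorm_witness gen hgen x
    exact ⟨w, by rw [Set.mem_setOf_eq, hlen]; exact Nat.le_floor hx, hw⟩
  exact (Set.Finite.image _ (List.finite_length_le _ _)).subset hsub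

end Aux

/-- in a `δ`-hyperbolic group, for `0 ≤ a ≤ ℓ` and `x ∈ B_ℓ`, the number of
`y ∈ B_ℓ` with Gromov product `(x,y) ≥ a` is at most `|B_{ℓ-a+2δ}|`. -/
theorem statement7 {G : Type*} [Group G] {m : ℕ} (hm : 2 ≤ m) (gen : Fin m → G)
    (hgen : Subgroup.closure (Set.range gen) = ⊤)
    (δ : ℝ) (hδ : 0 ≤ δ) (hhyp : IsHyperbolic gen δ)
    (ℓ a : ℕ) (ha : a ≤ ℓ) (x : G) (hx : x ∈ ball gen ℓ) :
    ({y ∈ ball gen (ℓ : ℝ) | (a : ℝ) ≤ gromov gen x y}).ncard ≤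
      (ball gen ((ℓ : ℝ) - a + 2 * δ)).ncard := by
  classical
  by_cases hax : a ≤ wordNorm gen x
  · obtain ⟨w, hlen, hw⟩ := wordNorm_witness gen hgen x
    set u := evalW gen (w.take a) with hu
    have hlen_take : (w.take a).length = a := by
      rw [List.length_take]; omega
    have hu_le : wordNorm gen u ≤ a := by
      have := wordNorm_le gen (w.take a) hu.symm
      omega
    have hux : evalW gen (w.drop a) = u⁻¹ * x := by
      have h1 : u * evalW gen (w.drop a) = x := by
        rw [hu, ← evalW_append, List.take_append_drop, hw]
      rw [← h1]; group
    have hdx : wordNorm gen (u⁻¹ * x) ≤ wordNorm gen x - a := by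
      have := wordNorm_le gen (w.drop a) hux
      have hld : (w.drop a).length = wordNorm gen x - a := by
        rw [List.length_drop, hlen]
      omega
    have htri : wordNorm gen x ≤ wordNorm gen u + wordNorm gen (u⁻¹ * x) := by
      have := wordNorm_mul_le gen hgen u (u⁻¹ * x)
      simpa using this
    have hu_eq : wordNorm gen u = a := by omega
    have hgux : (a : ℝ) ≤ gromov gen u x := by
      have h1 : (wordNorm gen (u⁻¹ * x) : ℝ) ≤ (wordNorm gen x : ℝ) - a := by
        have : (wordNorm gen (u⁻¹ * x) : ℝ) ≤ ((wordNorm gen x - a : ℕ) : ℝ) := by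
          exact_mod_cast hdx
        rw [Nat.cast_sub hax] at this
        exact this
      unfold gromov
      rw [hu_eq]
      linarith
    refine Set.ncard_le_ncard_of_injOn (fun y => u⁻¹ * y) ?_ ?_ (ball_finite gen hgen _)
    · rintro y ⟨hyb, hga⟩
      have h1 := hhyp u x y
      have h2 : (a : ℝ) - δ ≤ gromov gen u y := by
        have : (a : ℝ) ≤ min (gromov gen u x) (gromov gen x y) := le_min hgux hga
        linarith [h1]
      have hyb' : (wordNorm gen y : ℝ) ≤ ℓ := hyb
      show (wordNorm gen (u⁻¹ * y) : ℝ) ≤ (ℓ : ℝ) - a + 2 * δ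
      unfold gromov at h2
      rw [hu_eq] at h2
      linarith
    · intro y1 _ y2 _ h
      exact mul_left_cancel h
  · have hempty : {y ∈ ball gen (ℓ : ℝ) | (a : ℝ) ≤ gromov gen x y} = ∅ := by
      ext y
      simp only [Set.mem_sep_iff, Set.mem_empty_iff_false, iff_false, not_and]
      intro hyb hga
      have htri : wordNorm gen y ≤ wordNorm gen x + wordNorm gen (x⁻¹ * y) := by
        have := wordNorm_mul_le gen hgen x (x⁻¹ * y)
        simpa using this
      have htri' : (wordNorm gen y : ℝ) ≤ (wordNorm gen x : ℝ) + wordNorm gen (x⁻¹ * y) := by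
        exact_mod_cast htri
      have hxa : (wordNorm gen x : ℝ) < a := by exact_mod_cast Nat.lt_of_not_le hax
      unfold gromov at hga
      linarith
    rw [hempty]
    simp

end GrowthRQ
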